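/- Let n ≥ 2 and K ⊆ J ⊆ [n-1]. Then X(Σ)_{K,J} equals the set of classes [x;y] ∈ X(Σ) admitting a representative (x;y) with x_i = 0 for i ∈ K, x_i ≠ 0 for i ∉ K, y_i = 0 for i ∉ J, and y_i = 1 for i ∈ J. -/

import Mathlib

open Matrix

attribute [local instance] Classical.propDecidable

noncomputable section

namespace PetersonPaper

/-- `ℂ^{2(n-1)}` with coordinates `(x_1,…,x_{n-1}; y_1,…,y_{n-1})`. -/
abbrev C2 (n : ℕ) := (Fin (n-1) → ℂ) × (Fin (n-1) → ℂ)

/-- The complement `ℂ^{2(n-1)} - E` of the exceptional locus: for every `i`,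
`(x_i, y_i) ≠ (0,0)`. -/
def goodSet (n : ℕ) : Set (C2 n) := { p | ∀ i, p.1 i ≠ 0 ∨ p.2 i ≠ 0 }

/-- The maximal torus `T ⊆ SL_n(ℂ)` of diagonal matrices, recorded by its diagonal
entries `(t_1,…,t_n)` with `∏ t_i = 1`. -/
def TGrp (n : ℕ) : Type := { t : Fin n → ℂ // ∏ i, t i = 1 }

/-- The fundamental weight `ϖ_i(t) = t_1 t_2 ⋯ t_i` (1-based; `i : Fin (n-1)`
encodes `i.1+1`). -/
def varpi (n : ℕ) (t : TGrp n) (i : Fin (n-1)) : ℂ :=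
  ∏ k : Fin n, if (k : ℕ) ≤ (i : ℕ) then t.1 k else 1

/-- The simple root `α_i(t) = t_i t_{i+1}⁻¹` (1-based; `i : Fin (n-1)` encodes
`i.1+1`). -/
def alphaR (n : ℕ) (t : TGrp n) (i : Fin (n-1)) : ℂ :=
  t.1 ⟨i.1, by have := i.isLt; omega⟩ * (t.1 ⟨i.1 + 1, by have := i.isLt; omega⟩)⁻¹

/-- The `T`-action `t • (x; y) = (ϖ_i(t) x_i; α_i(t) y_i)`. -/
def actT (n : ℕ) (t : TGrp n) (p : C2 n) : C2 n :=
  (fun i => varpi n t i * p.1 i, fun i => alphaR n t i * p.2 i)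

/-- The orbit relation of the `T`-action on `ℂ^{2(n-1)} - E`. -/
def XRel (n : ℕ) (p q : goodSet n) : Prop := ∃ t : TGrp n, actT n t ↑p = (↑q : C2 n)

/-- The toric variety `X(Σ) = (ℂ^{2(n-1)} - E)/T`, with the quotient topology. -/
def XSig (n : ℕ) := Quot (XRel n)

noncomputable instance (n : ℕ) : TopologicalSpace (XSig n) :=
  inferInstanceAs (TopologicalSpace (Quot (XRel n)))

/-- The class `[x; y] ∈ X(Σ)` of a point of `ℂ^{2(n-1)} - E`. -/
def XMk (n : ℕ) (p : goodSet n) : XSig n := Quot.mk (XRel n) p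

/-- The torus orbit `X(Σ)_{K,J}`: classes `[x;y]` with `x_i = 0` iff `i ∈ K` and
`y_i ≠ 0` iff `i ∈ J`. -/
def XKJ (n : ℕ) (K J : Set (Fin (n-1))) : Set (XSig n) :=
  { z | ∃ p : goodSet n, XMk n p = z ∧
      (∀ i, (p : C2 n).1 i = 0 ↔ i ∈ K) ∧ (∀ i, (p : C2 n).2 i ≠ 0 ↔ i ∈ J) }

/-- The nonnegative part `X(Σ)_{≥0}`: classes with a representative all of whose
coordinates are real and nonnegative. -/
def Xge0 (n : ℕ) : Set (XSig n) :=
  { z | ∃ p : goodSet n, XMk n p = z ∧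
      ∀ i, ((p : C2 n).1 i).im = 0 ∧ 0 ≤ ((p : C2 n).1 i).re ∧
        ((p : C2 n).2 i).im = 0 ∧ 0 ≤ ((p : C2 n).2 i).re }

/-- `X(Σ)_{K,J;≥0} = X(Σ)_{K,J} ∩ X(Σ)_{≥0}`. -/
def XKJge0 (n : ℕ) (K J : Set (Fin (n-1))) : Set (XSig n) := XKJ n K J ∩ Xge0 n

/-- Given any nonzero target values `c i`, there is a torus element whose simple
root values are exactly `c` and whose fundamental weight values are nonzero. -/
lemma exists_torus_elt (n : ℕ) (hn : 2 ≤ n) (c : Fin (n-1) → ℂ) (hc : ∀ i, c i ≠ 0) :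
    ∃ t : TGrp n, (∀ i, alphaR n t i = c i) ∧ (∀ i, varpi n t i ≠ 0) := by
  classical
  set c' : ℕ → ℂ := fun j => if h : j < n-1 then c ⟨j, h⟩ else 1 with hc'def
  have hc'ne : ∀ j, c' j ≠ 0 := by
    intro j
    simp only [hc'def]
    split
    · exact hc _
    · exact one_ne_zero
  set u : ℕ → ℂ := fun k => ∏ j ∈ Finset.range k, (c' j)⁻¹ with hudef
  have hune : ∀ k, u k ≠ 0 := fun k =>
    Finset.prod_ne_zero_iff.2 fun j _ => inv_ne_zero (hc'ne j)
  set P : ℂ := ∏ k : Fin n, u k with hPdef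
  have hP : P ≠ 0 := Finset.prod_ne_zero_iff.2 fun k _ => hune k
  obtain ⟨s, hs⟩ := IsAlgClosed.exists_pow_nat_eq (k := ℂ) P⁻¹ (by omega : 0 < n)
  have hs0 : s ≠ 0 := by
    intro h
    rw [h, zero_pow (by omega : n ≠ 0)] at hs
    exact inv_ne_zero hP hs.symm
  have htne : ∀ k : ℕ, s * u k ≠ 0 := fun k => mul_ne_zero hs0 (hune k)
  refine ⟨⟨fun k => s * u (k : ℕ), ?_⟩, ?_, ?_⟩
  · rw [Finset.prod_mul_distrib, Finset.prod_const, Finset.card_univ, Fintype.card_fin, hs]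
    exact inv_mul_cancel₀ hP
  · intro i
    have hi : (i : ℕ) < n - 1 := i.isLt
    have h1 : u ((i : ℕ) + 1) = u (i : ℕ) * (c' (i : ℕ))⁻¹ := Finset.prod_range_succ _ _
    have h2 : c' (i : ℕ) = c i := by simp [hc'def, hi]
    show s * u (i : ℕ) * (s * u ((i : ℕ) + 1))⁻¹ = c i
    rw [h1, h2]
    field_simp
    exact mul_div_cancel_left₀ _ (hune _)
  · intro i
    refine Finset.prod_ne_zero_iff.2 fun k _ => ?_
    split
    · exact htne _
    · exact one_ne_zero

/-- Lemma (strata of `X(Σ)`): for `K ⊆ J ⊆ [n-1]`, `X(Σ)_{K,J}` consists exactly of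
the classes with a representative `(x;y)` with `x_i = 0` for `i ∈ K`, `x_i ≠ 0`
for `i ∉ K`, `y_i = 0` for `i ∉ J` and `y_i = 1` for `i ∈ J`. -/
theorem XKJ_description
    (n : ℕ) (hn : 2 ≤ n) (K J : Set (Fin (n-1))) (hKJ : K ⊆ J) :
    XKJ n K J =
      { z : XSig n | ∃ p : goodSet n, XMk n p = z ∧
          (∀ i, i ∈ K → (p : C2 n).1 i = 0) ∧
          (∀ i, i ∉ K → (p : C2 n).1 i ≠ 0) ∧
          (∀ i, i ∉ J → (p : C2 n).2 i = 0) ∧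
          (∀ i, i ∈ J → (p : C2 n).2 i = 1) } := by
  ext z
  constructor
  · rintro ⟨p, hp, hK, hJ⟩
    classical
    set c : Fin (n-1) → ℂ := fun i =>
      if h : (p : C2 n).2 i ≠ 0 then ((p : C2 n).2 i)⁻¹ else 1 with hcdef
    have hc : ∀ i, c i ≠ 0 := by
      intro i
      simp only [hcdef]
      split
      · exact inv_ne_zero (by assumption)
      · exact one_ne_zero
    obtain ⟨t, hα, hϖ⟩ := exists_torus_elt n hn c hc
    have hq : actT n t ↑p ∈ goodSet n := by
      intro i
      rcases p.2 i with h | h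
      · exact Or.inl (mul_ne_zero (hϖ i) h)
      · exact Or.inr (mul_ne_zero (by rw [hα i]; exact hc i) h)
    refine ⟨⟨actT n t ↑p, hq⟩, ?_, ?_, ?_, ?_, ?_⟩
    · rw [← hp]
      exact (Quot.sound ⟨t, rfl⟩).symm
    · intro i hi
      show varpi n t i * (p : C2 n).1 i = 0
      rw [(hK i).2 hi, mul_zero]
    · intro i hi
      exact mul_ne_zero (hϖ i) (fun h0 => hi ((hK i).1 h0))
    · intro i hi
      show alphaR n t i * (p : C2 n).2 i = 0
      have : (p : C2 n).2 i = 0 := by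
        by_contra h0
        exact hi ((hJ i).1 h0)
      rw [this, mul_zero]
    · intro i hi
      have hne : (p : C2 n).2 i ≠ 0 := (hJ i).2 hi
      show alphaR n t i * (p : C2 n).2 i = 1
      rw [hα i, hcdef]
      simp only [hne, dif_pos, ne_eq, not_false_eq_true]
      exact inv_mul_cancel₀ hne
  · rintro ⟨p, hp, h1, h2, h3, h4⟩
    refine ⟨p, hp, fun i => ⟨fun h0 => ?_, h1 i⟩, fun i => ⟨fun h0 => ?_, fun hi => ?_⟩⟩
    · by_contra hi
      exact h2 i hi h0
    · by_contra hi
      exact h0 (h3 i hi)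
    · rw [h4 i hi]
      exact one_ne_zero

end PetersonPaper
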